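/- Let $2 \leq a < b \leq d-2$ be integers with $b \geq 2a-1$. Then for every $n \geq 1$: $\bigcup_{i+j \leq n} [ia+jd, ib+jd] + \{0,d\} = \{0, d, 2d, \ldots, (n+1)d\} \cup [a, nb] \cup \bigcup_{j=1}^{n} [a + jd, (n+1-j)b + jd]$. -/
import Mathlib


open Pointwise

lemma icc_union_helper (a b : ℤ) (ha : 2 ≤ a) (hab : a < b) (hb : b ≥ 2 * a - 1)
    (m : ℤ) (hm : 1 ≤ m) (x : ℤ) (hx1 : a ≤ x) (hx2 : x ≤ m * b) :
    ∃ k : ℤ, 1 ≤ k ∧ k ≤ m ∧ k * a ≤ x ∧ x ≤ k * b := by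
  have ha0 : 0 < a := by linarith
  have hmod : 0 ≤ x % a := Int.emod_nonneg x (by omega)
  have hdm : a * (x / a) + x % a = x := Int.mul_ediv_add_emod x a
  have hda : x / a * a ≤ x := by linarith [hdm]
  refine ⟨min m (x / a), ?_, min_le_left _ _, ?_, ?_⟩
  · have : 1 ≤ x / a := by rw [Int.le_ediv_iff_mul_le ha0]; linarith
    exact le_min hm this
  · have h1 : min m (x / a) ≤ x / a := min_le_right _ _
    nlinarith [mul_le_mul_of_nonneg_right h1 (le_of_lt ha0)]
  · rcases le_or_gt m (x / a) with h | h
    · rw [min_eq_left h]; exact hx2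
    · rw [min_eq_right h.le]
      have h3 : x < (x / a + 1) * a := Int.lt_ediv_add_one_mul_self x ha0
      have h4 : 1 ≤ x / a := by rw [Int.le_ediv_iff_mul_le ha0]; linarith
      nlinarith [mul_nonneg (by linarith : (0:ℤ) ≤ x / a - 1) (by linarith : (0:ℤ) ≤ b - a)]

/-- Formula (3.2): for `2 ≤ a < b ≤ d-2` with `b ≥ 2a-1` and every `n ≥ 1`,
`(⋃_{i+j ≤ n} [ia+jd, ib+jd]) + {0, d}
  = {0, d, ..., (n+1)d} ∪ [a, nb] ∪ ⋃_{j=1}^{n} [a+jd, (n+1-j)b+jd]`. -/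
theorem caseB1_sum_formula (a b d : ℤ) (ha : 2 ≤ a) (hab : a < b) (hbd : b ≤ d - 2)
    (hb : b ≥ 2 * a - 1) :
    ∀ n : ℕ, 1 ≤ n →
      (⋃ i : ℕ, ⋃ j : ℕ, ⋃ (_ : i + j ≤ n),
          Set.Icc ((i : ℤ) * a + (j : ℤ) * d) ((i : ℤ) * b + (j : ℤ) * d))
        + ({0, d} : Set ℤ) =
      (⋃ j ∈ Finset.range (n + 2), ({(j : ℤ) * d} : Set ℤ))
        ∪ Set.Icc a ((n : ℤ) * b)
        ∪ ⋃ j ∈ Finset.Icc 1 n,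
            Set.Icc (a + (j : ℤ) * d) (((n : ℤ) + 1 - (j : ℤ)) * b + (j : ℤ) * d) := by
  intro n hn
  have hd : b + 2 ≤ d := by linarith
  ext x
  simp only [Set.mem_add, Set.mem_iUnion, Set.mem_Icc, Set.mem_union,
    Set.mem_insert_iff, Set.mem_singleton_iff, Finset.mem_range, Finset.mem_Icc,
    exists_prop]
  constructor
  · rintro ⟨y, ⟨i, j, hij, hy1, hy2⟩, z, hz, rfl⟩
    have hijZ : (i : ℤ) + (j : ℤ) ≤ (n : ℤ) := by exact_mod_cast hij
    have hjn : (j : ℤ) ≤ n := by linarith [Int.natCast_nonneg i]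
    rcases hz with rfl | rfl
    · rcases Nat.eq_zero_or_pos i with rfl | hi
      · left; left
        exact ⟨j, by omega, by push_cast at hy1 hy2 ⊢; linarith⟩
      · have hi1 : (1 : ℤ) ≤ i := by exact_mod_cast hi
        rcases Nat.eq_zero_or_pos j with rfl | hj
        · left; right
          push_cast at hy1 hy2 ⊢
          constructor
          · nlinarith
          · nlinarith
        · right
          have hj1 : (1 : ℤ) ≤ j := by exact_mod_cast hj
          refine ⟨j, ⟨hj, by omega⟩, ?_, ?_⟩
          · nlinarith
          · nlinarith
    · rcases Nat.eq_zero_or_pos i with rfl | hi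
      · left; left
        refine ⟨j + 1, by omega, ?_⟩
        push_cast at hy1 hy2 ⊢; linarith
      · have hi1 : (1 : ℤ) ≤ i := by exact_mod_cast hi
        right
        refine ⟨j + 1, ⟨by omega, by omega⟩, ?_, ?_⟩
        · push_cast; nlinarith
        · push_cast; nlinarith
  · rintro ((⟨j, hj, rfl⟩ | ⟨hx1, hx2⟩) | ⟨j, ⟨hj1, hj2⟩, hx1, hx2⟩)
    · rcases Nat.lt_or_ge j (n + 1) with h | h
      · exact ⟨(j : ℤ) * d, ⟨0, j, by omega, by simp, by simp⟩, 0, Or.inl rfl, by ring⟩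
      · have hje : j = n + 1 := by omega
        subst hje
        refine ⟨(n : ℤ) * d, ⟨0, n, by omega, by simp, by simp⟩, d, Or.inr rfl, by push_cast; ring⟩
    · obtain ⟨k, hk1, hk2, hk3, hk4⟩ := icc_union_helper a b ha hab hb n
        (by exact_mod_cast hn) x hx1 hx2
      refine ⟨x, ⟨k.toNat, 0, ?_, ?_, ?_⟩, 0, Or.inl rfl, by ring⟩
      · have : (k.toNat : ℤ) ≤ n := by rwa [Int.toNat_of_nonneg (by linarith)]
        omega
      · rw [Int.toNat_of_nonneg (by linarith)]; push_cast; linarith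
      · rw [Int.toNat_of_nonneg (by linarith)]; push_cast; linarith
    · have hjZ1 : (1 : ℤ) ≤ j := by exact_mod_cast hj1
      have hjZ2 : (j : ℤ) ≤ n := by exact_mod_cast hj2
      obtain ⟨k, hk1, hk2, hk3, hk4⟩ := icc_union_helper a b ha hab hb ((n : ℤ) + 1 - j)
        (by linarith) (x - (j : ℤ) * d) (by linarith) (by linarith)
      refine ⟨x - d, ⟨k.toNat, j - 1, ?_, ?_, ?_⟩, d, Or.inr rfl, by ring⟩
      · have : (k.toNat : ℤ) ≤ (n : ℤ) + 1 - j := by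
          rwa [Int.toNat_of_nonneg (by linarith)]
        omega
      · rw [Int.toNat_of_nonneg (by linarith)]
        have : ((j - 1 : ℕ) : ℤ) = (j : ℤ) - 1 := by omega
        rw [this]; linarith
      · rw [Int.toNat_of_nonneg (by linarith)]
        have : ((j - 1 : ℕ) : ℤ) = (j : ℤ) - 1 := by omega
        rw [this]; linarith
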